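/- The tableau calculus T_{K_m(¬)} is sound and constructively complete for the logic K_m(¬): every fully expanded T_{K_m(¬)}-tableau for a satisfiable finite set of K_m(¬)-formulas has an open branch, and for every open branch B of a fully expanded T_{K_m(¬)}-tableau there exists a K_m(¬)-model I(B), whose domain is the set of labels occurring in B, in which every tableau formula of B is true (T(φ,t)∈B implies I(B),t ⊨ φ; F(φ,t)∈B implies I(B),t ⊭ φ; T_R(α,t,t')∈B implies (t,t')∈R_α in I(B); F_R(α,t,t')∈B implies (t,t')∉R_α in I(B)). -/

import Mathlib

set_option autoImplicit false

namespace KmNotTableau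

/-- Relation terms of the logic `K_m(¬)`: `α ::= a_1 | … | a_m | ¬α`. -/
inductive RTerm (m : ℕ) : Type
  | atom : Fin m → RTerm m
  | neg : RTerm m → RTerm m

/-- Formulas of the logic `K_m(¬)`: `φ ::= p | ¬φ | φ∨φ | [α]φ`. -/
inductive Fm (m : ℕ) : Type
  | var : ℕ → Fm m
  | neg : Fm m → Fm m
  | or : Fm m → Fm m → Fm m
  | box : RTerm m → Fm m → Fm m

/-- A `K_m(¬)`-model `M = (W, (R_a)_a, V)` with `W` nonempty. -/
structure KModel (m : ℕ) where
  W : Type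
  ne : Nonempty W
  R : Fin m → W → W → Prop
  V : ℕ → W → Prop

/-- Interpretation of relation terms: `R_{¬α} = (W×W) ∖ R_α`. -/
def KModel.RT {m : ℕ} (M : KModel m) : RTerm m → M.W → M.W → Prop
  | .atom a => M.R a
  | .neg α => fun v w => ¬ M.RT α v w

/-- Satisfaction in a `K_m(¬)`-model. -/
def KModel.sat {m : ℕ} (M : KModel m) : M.W → Fm m → Prop
  | v, .var p => M.V p v
  | v, .neg φ => ¬ M.sat v φ
  | v, .or φ ψ => M.sat v φ ∨ M.sat v ψ
  | v, .box α φ => ∀ w, M.RT α v w → M.sat w φ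

/-- A set of formulas is satisfiable if some model and world satisfy all its members. -/
def Satisfiable {m : ℕ} (N : Set (Fm m)) : Prop :=
  ∃ (M : KModel m) (v : M.W), ∀ φ ∈ N, M.sat v φ

/-- Labels: terms generated from the initial constant `a₀` and Skolem terms `f(α,φ,t)`. -/
inductive Label (m : ℕ) : Type
  | a0 : Label m
  | sk : RTerm m → Fm m → Label m → Label m

/-- Tableau formulas: `T(φ,t)`, `F(φ,t)`, `T_R(α,t,t')`, `F_R(α,t,t')`. -/
inductive TabFm (m : ℕ) : Type
  | T : Fm m → Label m → TabFm m
  | F : Fm m → Label m → TabFm m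
  | TR : RTerm m → Label m → Label m → TabFm m
  | FR : RTerm m → Label m → Label m → TabFm m

/-- The labels occurring in a tableau formula. -/
def TabFm.labels {m : ℕ} : TabFm m → Set (Label m)
  | .T _ t => {t}
  | .F _ t => {t}
  | .TR _ t t' => {t, t'}
  | .FR _ t t' => {t, t'}

/-- The labels occurring in a set of tableau formulas (the initial label `a₀`,
introduced at the root, always counts as occurring). -/
def Lab {m : ℕ} (B : Set (TabFm m)) : Set (Label m) :=
  insert Label.a0 {t | ∃ f ∈ B, t ∈ f.labels}

/-- A calculus: `C s ds` holds if, on a branch whose set of formulas is `s`, some rule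
of the calculus is applicable with denominator instances `ds` (a closure rule
application has `ds = []`). -/
abbrev Calc (m : ℕ) := Set (TabFm m) → List (Set (TabFm m)) → Prop

/-- The root node `{T(φ,a₀) | φ ∈ N}` of a tableau for input `N`. -/
def initial {m : ℕ} (N : Set (Fm m)) : Set (TabFm m) :=
  {f | ∃ φ ∈ N, f = TabFm.T φ Label.a0}

/-- A tableau for input `N` in calculus `C`: a finitely branching tree of sets of tableau
formulas (nodes indexed by positions `List ℕ`, children of `p` being `p ++ [i]`), whose
root is `{T(φ,a₀) | φ ∈ N}`, and such that the children of every node are obtained by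
applying a rule of `C`: each child adds one denominator instance to the node's set. -/
structure Tableau (m : ℕ) (C : Calc m) (N : Set (Fm m)) where
  node : List ℕ → Option (Set (TabFm m))
  rootEq : node [] = some (initial N)
  tree : ∀ (p : List ℕ) (i : ℕ), node (p ++ [i]) ≠ none → node p ≠ none
  step : ∀ (p : List ℕ) (s : Set (TabFm m)), node p = some s →
    (∀ i : ℕ, node (p ++ [i]) = none) ∨
    (∃ ds, C s ds ∧ ∀ i : ℕ, node (p ++ [i]) = (ds[i]?).map (fun d => s ∪ d))

/-- A branch of a tableau: a maximal path from the root (represented by its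
set of positions, a maximal chain under the prefix order). -/
structure Branch {m : ℕ} {C : Calc m} {N : Set (Fm m)} (Tb : Tableau m C N) where
  pos : Set (List ℕ)
  inTree : ∀ p ∈ pos, Tb.node p ≠ none
  chain : ∀ p ∈ pos, ∀ q ∈ pos, p <+: q ∨ q <+: p
  downClosed : ∀ p ∈ pos, ∀ q : List ℕ, q <+: p → q ∈ pos
  maximal : ∀ q : List ℕ, Tb.node q ≠ none → (∀ p ∈ pos, p <+: q ∨ q <+: p) → q ∈ pos

/-- The set of tableau formulas occurring on a branch. -/
def Branch.fmls {m : ℕ} {C : Calc m} {N : Set (Fm m)} {Tb : Tableau m C N}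
    (Br : Branch Tb) : Set (TabFm m) :=
  {f | ∃ p ∈ Br.pos, ∃ s, Tb.node p = some s ∧ f ∈ s}

/-- A branch is open if no closure rule has been applied (is applicable) on it. -/
def Branch.IsOpen {m : ℕ} {C : Calc m} {N : Set (Fm m)} {Tb : Tableau m C N}
    (Br : Branch Tb) : Prop := ¬ C Br.fmls []

/-- A tableau is fully expanded if on every open branch every applicable rule has been
applied, i.e. some denominator instance of the rule is already contained in the branch. -/
def Tableau.Expanded {m : ℕ} {C : Calc m} {N : Set (Fm m)} (Tb : Tableau m C N) : Prop :=
  ∀ Br : Branch Tb, Br.IsOpen → ∀ ds, C Br.fmls ds → ∃ d ∈ ds, d ⊆ Br.fmls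

/-- A `K_m(¬)`-model whose domain is (a set of) labels: the model `I(B)` constructed
from a branch has domain the set of labels occurring in `B`. -/
structure LModel (m : ℕ) where
  R : Fin m → Label m → Label m → Prop
  V : ℕ → Label m → Prop

/-- Interpretation of relation terms in a label model: `R_{¬α}` is the complement. -/
def LModel.RT {m : ℕ} (M : LModel m) : RTerm m → Label m → Label m → Prop
  | .atom a => M.R a
  | .neg α => fun t t' => ¬ M.RT α t t'

/-- Satisfaction in a label model relativised to its domain `D`. -/
def LModel.sat {m : ℕ} (M : LModel m) (D : Set (Label m)) : Label m → Fm m → Prop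
  | t, .var p => M.V p t
  | t, .neg φ => ¬ M.sat D t φ
  | t, .or φ ψ => M.sat D t φ ∨ M.sat D t ψ
  | t, .box α φ => ∀ t' ∈ D, M.RT α t t' → M.sat D t' φ

/-- Every tableau formula of `B` is true in the model `M` with domain `Lab B`:
`T(φ,t) ∈ B` implies `φ` holds at `t`; `F(φ,t) ∈ B` implies `φ` fails at `t`;
`T_R(α,t,t') ∈ B` implies `(t,t') ∈ R_α`; `F_R(α,t,t') ∈ B` implies `(t,t') ∉ R_α`. -/
def Reflects {m : ℕ} (M : LModel m) (B : Set (TabFm m)) : Prop :=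
  (∀ φ t, TabFm.T φ t ∈ B → M.sat (Lab B) t φ) ∧
  (∀ φ t, TabFm.F φ t ∈ B → ¬ M.sat (Lab B) t φ) ∧
  (∀ α t t', TabFm.TR α t t' ∈ B → M.RT α t t') ∧
  (∀ α t t', TabFm.FR α t t' ∈ B → ¬ M.RT α t t')

/-- The calculus `T_{K_m(¬)}`. -/
def TKmNot (m : ℕ) : Calc m := fun s ds =>
  -- (¬⁺) T(¬p,x) / F(p,x)
  (∃ φ x, TabFm.T (.neg φ) x ∈ s ∧ ds = [{TabFm.F φ x}]) ∨
  -- (¬⁻) F(¬p,x) / T(p,x)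
  (∃ φ x, TabFm.F (.neg φ) x ∈ s ∧ ds = [{TabFm.T φ x}]) ∨
  -- (∨⁺) T(p∨q,x) / T(p,x) | T(q,x)
  (∃ φ ψ x, TabFm.T (.or φ ψ) x ∈ s ∧ ds = [{TabFm.T φ x}, {TabFm.T ψ x}]) ∨
  -- (∨⁻) F(p∨q,x) / F(p,x), F(q,x)
  (∃ φ ψ x, TabFm.F (.or φ ψ) x ∈ s ∧ ds = [{TabFm.F φ x, TabFm.F ψ x}]) ∨
  -- (box) T([r]p,x) / F_R(r,x,y) | T(p,y), for any label y occurring on the branch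
  (∃ α φ x y, TabFm.T (.box α φ) x ∈ s ∧ y ∈ Lab s ∧
    ds = [{TabFm.FR α x y}, {TabFm.T φ y}]) ∨
  -- (dia) F([r]p,x) / T_R(r,x,f(r,p,x)), F(p,f(r,p,x))
  (∃ α φ x, TabFm.F (.box α φ) x ∈ s ∧
    ds = [{TabFm.TR α x (Label.sk α φ x), TabFm.F φ (Label.sk α φ x)}]) ∨
  -- closure rules
  (∃ φ x, TabFm.T φ x ∈ s ∧ TabFm.F φ x ∈ s ∧ ds = []) ∨
  (∃ α x y, TabFm.TR α x y ∈ s ∧ TabFm.FR α x y ∈ s ∧ ds = []) ∨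
  -- (¬R⁺) T_R(¬r,x,y) / F_R(r,x,y)
  (∃ α x y, TabFm.TR (.neg α) x y ∈ s ∧ ds = [{TabFm.FR α x y}]) ∨
  -- (¬R⁻) F_R(¬r,x,y) / T_R(r,x,y)
  (∃ α x y, TabFm.FR (.neg α) x y ∈ s ∧ ds = [{TabFm.TR α x y}])


section Aux

variable {m : ℕ}

open Classical in
noncomputable def iota (M : KModel m) (v : M.W) : Label m → M.W
  | .a0 => v
  | .sk α φ t =>
      if h : ∃ w, M.RT α (iota M v t) w ∧ ¬ M.sat w φ then h.choose else iota M v t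

/-- A tableau formula holds in a model under a label valuation. -/
def Holds (M : KModel m) (ι : Label m → M.W) : TabFm m → Prop
  | .T φ t => M.sat (ι t) φ
  | .F φ t => ¬ M.sat (ι t) φ
  | .TR α t t' => M.RT α (ι t) (ι t')
  | .FR α t t' => ¬ M.RT α (ι t) (ι t')

/-- A set of tableau formulas is realized if every member holds. -/
def Realized (M : KModel m) (ι : Label m → M.W) (s : Set (TabFm m)) : Prop :=
  ∀ f ∈ s, Holds M ι f

lemma realized_step (M : KModel m) (v : M.W) (s : Set (TabFm m))
    (ds : List (Set (TabFm m)))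
    (hs : Realized M (iota M v) s) (hC : TKmNot m s ds) :
    ∃ d ∈ ds, Realized M (iota M v) (s ∪ d) := by
  set ι := iota M v with hι
  have hext : ∀ d : Set (TabFm m), (∀ f ∈ d, Holds M ι f) → Realized M ι (s ∪ d) := by
    intro d hd f hf
    rcases hf with h | h
    · exact hs f h
    · exact hd f h
  rcases hC with ⟨φ,x,h,rfl⟩|⟨φ,x,h,rfl⟩|⟨φ,ψ,x,h,rfl⟩|⟨φ,ψ,x,h,rfl⟩|
    ⟨α,φ,x,y,h,hy,rfl⟩|⟨α,φ,x,h,rfl⟩|⟨φ,x,h1,h2,rfl⟩|⟨α,x,y,h1,h2,rfl⟩|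
    ⟨α,x,y,h,rfl⟩|⟨α,x,y,h,rfl⟩
  · -- ¬⁺
    refine ⟨{TabFm.F φ x}, by simp, hext _ ?_⟩
    intro f hf
    rw [Set.mem_singleton_iff] at hf; subst hf
    have := hs _ h
    simp only [Holds, KModel.sat] at this ⊢
    exact this
  · -- ¬⁻
    refine ⟨{TabFm.T φ x}, by simp, hext _ ?_⟩
    intro f hf
    rw [Set.mem_singleton_iff] at hf; subst hf
    have := hs _ h
    simp only [Holds, KModel.sat, not_not] at this ⊢
    exact this
  · -- ∨⁺
    have := hs _ h
    simp only [Holds, KModel.sat] at this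
    rcases this with hl | hr
    · refine ⟨{TabFm.T φ x}, by simp, hext _ ?_⟩
      intro f hf
      rw [Set.mem_singleton_iff] at hf; subst hf; exact hl
    · refine ⟨{TabFm.T ψ x}, by simp, hext _ ?_⟩
      intro f hf
      rw [Set.mem_singleton_iff] at hf; subst hf; exact hr
  · -- ∨⁻
    have := hs _ h
    simp only [Holds, KModel.sat, not_or] at this
    refine ⟨{TabFm.F φ x, TabFm.F ψ x}, by simp, hext _ ?_⟩
    intro f hf
    rcases hf with hf | hf
    · subst hf; exact this.1
    · rw [Set.mem_singleton_iff] at hf; subst hf; exact this.2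
  · -- box
    have hb := hs _ h
    simp only [Holds, KModel.sat] at hb
    by_cases hr : M.RT α (ι x) (ι y)
    · refine ⟨{TabFm.T φ y}, by simp, hext _ ?_⟩
      intro f hf
      rw [Set.mem_singleton_iff] at hf; subst hf
      exact hb _ hr
    · refine ⟨{TabFm.FR α x y}, by simp, hext _ ?_⟩
      intro f hf
      rw [Set.mem_singleton_iff] at hf; subst hf
      exact hr
  · -- dia
    have hb := hs _ h
    simp only [Holds, KModel.sat] at hb
    push_neg at hb
    have hw : ∃ w, M.RT α (iota M v x) w ∧ ¬ M.sat w φ := hb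
    have hsk : iota M v (Label.sk α φ x) = hw.choose := by
      rw [iota, dif_pos hw]
    refine ⟨{TabFm.TR α x (Label.sk α φ x), TabFm.F φ (Label.sk α φ x)}, by simp, hext _ ?_⟩
    intro f hf
    rcases hf with hf | hf
    · subst hf
      show M.RT α (ι x) (ι (Label.sk α φ x))
      rw [hι, hsk]
      exact hw.choose_spec.1
    · rw [Set.mem_singleton_iff] at hf; subst hf
      show ¬ M.sat (ι (Label.sk α φ x)) φ
      rw [hι, hsk]
      exact hw.choose_spec.2
  · exact absurd (hs _ h1) (hs _ h2)
  · exact absurd (hs _ h1) (hs _ h2)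
  · -- ¬R⁺
    refine ⟨{TabFm.FR α x y}, by simp, hext _ ?_⟩
    intro f hf
    rw [Set.mem_singleton_iff] at hf; subst hf
    have := hs _ h
    simp only [Holds, KModel.RT] at this ⊢
    exact this
  · -- ¬R⁻
    refine ⟨{TabFm.TR α x y}, by simp, hext _ ?_⟩
    intro f hf
    rw [Set.mem_singleton_iff] at hf; subst hf
    have := hs _ h
    simp only [Holds, KModel.RT, not_not] at this ⊢
    exact this

lemma node_ne_none_of_prefix {C : Calc m} {N : Set (Fm m)} (Tb : Tableau m C N) :
    ∀ q : List ℕ, Tb.node q ≠ none → ∀ p, p <+: q → Tb.node p ≠ none := by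
  intro q
  induction q using List.reverseRecOn with
  | nil =>
    intro hq p hp
    rw [List.prefix_nil.mp hp]; exact hq
  | append_singleton q' i ih =>
    intro hq p hp
    by_cases he : p = q' ++ [i]
    · rw [he]; exact hq
    · have hlen : p.length ≤ q'.length := by
        have h1 := hp.length_le
        simp only [List.length_append, List.length_singleton] at h1
        rcases Nat.lt_or_ge p.length (q'.length + 1) with h | h
        · omega
        · exact absurd (List.IsPrefix.eq_of_length hp (by
            simp only [List.length_append, List.length_singleton]; omega)) he
      exact ih (Tb.tree q' i hq) p
        (List.prefix_of_prefix_length_le hp (List.prefix_append _ _) hlen)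

lemma subset_of_child {C : Calc m} {N : Set (Fm m)} (Tb : Tableau m C N)
    (p : List ℕ) (i : ℕ) (s s' : Set (TabFm m))
    (hp : Tb.node p = some s) (hq : Tb.node (p ++ [i]) = some s') : s ⊆ s' := by
  rcases Tb.step p s hp with hall | ⟨ds, _, hch⟩
  · rw [hall i] at hq; cases hq
  · have := hch i
    rw [hq] at this
    match hd : ds[i]? with
    | none => rw [hd] at this; simp at this
    | some d =>
      rw [hd] at this
      simp only [Option.map_some] at this
      rw [Option.some.injEq] at this
      rw [this]
      exact Set.subset_union_left

lemma subset_of_prefix {C : Calc m} {N : Set (Fm m)} (Tb : Tableau m C N) :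
    ∀ (q p : List ℕ) (s s' : Set (TabFm m)), p <+: q →
      Tb.node p = some s → Tb.node q = some s' → s ⊆ s' := by
  intro q
  induction q using List.reverseRecOn with
  | nil =>
    intro p s s' hp hps hqs
    rw [List.prefix_nil.mp hp] at hps
    rw [hps, Option.some.injEq] at hqs
    rw [hqs]
  | append_singleton q' i ih =>
    intro p s s' hp hps hqs
    by_cases he : p = q' ++ [i]
    · subst he
      rw [hps, Option.some.injEq] at hqs
      rw [hqs]
    · have hlen : p.length ≤ q'.length := by
        have h1 := hp.length_le
        simp only [List.length_append, List.length_singleton] at h1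
        rcases Nat.lt_or_ge p.length (q'.length + 1) with h | h
        · omega
        · exact absurd (List.IsPrefix.eq_of_length hp (by
            simp only [List.length_append, List.length_singleton]; omega)) he
      have hpq' : p <+: q' :=
        List.prefix_of_prefix_length_le hp (List.prefix_append _ _) hlen
      have hq' : Tb.node q' ≠ none := Tb.tree q' i (by rw [hqs]; exact Option.some_ne_none _)
      obtain ⟨s'', hs''⟩ := Option.ne_none_iff_exists'.mp hq'
      exact (ih p s s'' hpq' hps hs'').trans (subset_of_child Tb q' i s'' s' hs'' hqs)

lemma reflects_of_open (B : Set (TabFm m))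
    (hOpen : ¬ TKmNot m B [])
    (hexp : ∀ ds, TKmNot m B ds → ∃ d ∈ ds, d ⊆ B) :
    ∃ M : LModel m, Reflects M B := by
  classical
  set M : LModel m := ⟨fun a t t' => TabFm.TR (.atom a) t t' ∈ B,
    fun p t => TabFm.T (.var p) t ∈ B⟩ with hM
  have noTF : ∀ φ t, TabFm.T φ t ∈ B → TabFm.F φ t ∈ B → False := by
    intro φ t h1 h2
    exact hOpen (Or.inr (Or.inr (Or.inr (Or.inr (Or.inr (Or.inr
      (Or.inl ⟨φ, t, h1, h2, rfl⟩)))))))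
  have noTRFR : ∀ α t t', TabFm.TR α t t' ∈ B → TabFm.FR α t t' ∈ B → False := by
    intro α t t' h1 h2
    exact hOpen (Or.inr (Or.inr (Or.inr (Or.inr (Or.inr (Or.inr (Or.inr
      (Or.inl ⟨α, t, t', h1, h2, rfl⟩))))))))
  have getone : ∀ d : Set (TabFm m), TKmNot m B [d] → d ⊆ B := by
    intro d hC
    obtain ⟨d', hd', hsub⟩ := hexp _ hC
    simp only [List.mem_singleton] at hd'
    rwa [hd'] at hsub
  have rel : ∀ α t t', (TabFm.TR α t t' ∈ B → M.RT α t t') ∧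
      (TabFm.FR α t t' ∈ B → ¬ M.RT α t t') := by
    intro α
    induction α with
    | atom a =>
      intro t t'
      refine ⟨fun h => h, fun h hr => noTRFR _ _ _ hr h⟩
    | neg α ih =>
      intro t t'
      constructor
      · intro h
        have hF : TabFm.FR α t t' ∈ B :=
          getone _ (Or.inr (Or.inr (Or.inr (Or.inr (Or.inr (Or.inr (Or.inr (Or.inr
            (Or.inl ⟨α, t, t', h, rfl⟩))))))))) (Set.mem_singleton _)
        show ¬ M.RT α t t'
        exact (ih t t').2 hF
      · intro h
        have hT : TabFm.TR α t t' ∈ B :=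
          getone _ (Or.inr (Or.inr (Or.inr (Or.inr (Or.inr (Or.inr (Or.inr (Or.inr
            (Or.inr ⟨α, t, t', h, rfl⟩))))))))) (Set.mem_singleton _)
        show ¬ ¬ M.RT α t t'
        exact not_not_intro ((ih t t').1 hT)
  have main : ∀ φ : Fm m, ∀ t, (TabFm.T φ t ∈ B → M.sat (Lab B) t φ) ∧
      (TabFm.F φ t ∈ B → ¬ M.sat (Lab B) t φ) := by
    intro φ
    induction φ with
    | var p =>
      intro t
      exact ⟨fun h => h, fun h hs => noTF _ _ hs h⟩
    | neg φ ih =>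
      intro t
      constructor
      · intro h
        have hF : TabFm.F φ t ∈ B :=
          getone _ (Or.inl ⟨φ, t, h, rfl⟩) (Set.mem_singleton _)
        show ¬ M.sat (Lab B) t φ
        exact (ih t).2 hF
      · intro h
        have hT : TabFm.T φ t ∈ B :=
          getone _ (Or.inr (Or.inl ⟨φ, t, h, rfl⟩)) (Set.mem_singleton _)
        show ¬ ¬ M.sat (Lab B) t φ
        exact not_not_intro ((ih t).1 hT)
    | or φ ψ ihφ ihψ =>
      intro t
      constructor
      · intro h
        obtain ⟨d, hd, hsub⟩ := hexp _ (Or.inr (Or.inr (Or.inl ⟨φ, ψ, t, h, rfl⟩)))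
        show M.sat (Lab B) t φ ∨ M.sat (Lab B) t ψ
        simp only [List.mem_cons, List.mem_singleton, List.not_mem_nil, or_false] at hd
        rcases hd with hd | hd
        · exact Or.inl ((ihφ t).1 (hd ▸ hsub <| Set.mem_singleton _))
        · exact Or.inr ((ihψ t).1 (hd ▸ hsub <| Set.mem_singleton _))
      · intro h
        have hsub : ({TabFm.F φ t, TabFm.F ψ t} : Set (TabFm m)) ⊆ B :=
          getone _ (Or.inr (Or.inr (Or.inr (Or.inl ⟨φ, ψ, t, h, rfl⟩))))
        show ¬ (M.sat (Lab B) t φ ∨ M.sat (Lab B) t ψ)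
        rintro (hs | hs)
        · exact (ihφ t).2 (hsub (Or.inl rfl)) hs
        · exact (ihψ t).2 (hsub (Or.inr rfl)) hs
    | box α φ ih =>
      intro t
      constructor
      · intro h
        show ∀ t' ∈ Lab B, M.RT α t t' → M.sat (Lab B) t' φ
        intro t' ht' hrt
        obtain ⟨d, hd, hsub⟩ := hexp _ (Or.inr (Or.inr (Or.inr (Or.inr
          (Or.inl ⟨α, φ, t, t', h, ht', rfl⟩)))))
        simp only [List.mem_cons, List.mem_singleton, List.not_mem_nil, or_false] at hd
        rcases hd with hd | hd
        · exact absurd hrt ((rel α t t').2 (hd ▸ hsub <| Set.mem_singleton _))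
        · exact (ih t').1 (hd ▸ hsub <| Set.mem_singleton _)
      · intro h
        have hsub : ({TabFm.TR α t (Label.sk α φ t), TabFm.F φ (Label.sk α φ t)} :
            Set (TabFm m)) ⊆ B :=
          getone _ (Or.inr (Or.inr (Or.inr (Or.inr (Or.inr
            (Or.inl ⟨α, φ, t, h, rfl⟩))))))
        have hTR : TabFm.TR α t (Label.sk α φ t) ∈ B := hsub (Or.inl rfl)
        have hFφ : TabFm.F φ (Label.sk α φ t) ∈ B := hsub (Or.inr rfl)
        have hmem : Label.sk α φ t ∈ Lab B := by
          refine Set.mem_insert_iff.mpr (Or.inr ⟨TabFm.TR α t (Label.sk α φ t), hTR, ?_⟩)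
          simp [TabFm.labels]
        show ¬ ∀ t' ∈ Lab B, M.RT α t t' → M.sat (Lab B) t' φ
        intro hs
        exact (ih _).2 hFφ (hs _ hmem ((rel α t _).1 hTR))
  exact ⟨M, fun φ t h => (main φ t).1 h, fun φ t h => (main φ t).2 h,
    fun α t t' h => (rel α t t').1 h, fun α t t' h => (rel α t t').2 h⟩

lemma exists_open_branch (N : Set (Fm m)) (M : KModel m) (v : M.W)
    (hv : ∀ φ ∈ N, M.sat v φ) (Tb : Tableau m (TKmNot m) N) :
    ∃ Br : Branch Tb, Br.IsOpen := by
  classical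
  set Inv : List ℕ → Prop :=
    fun p => ∃ s, Tb.node p = some s ∧ Realized M (iota M v) s with hInvDef
  have hInvRoot : Inv [] := by
    refine ⟨initial N, Tb.rootEq, ?_⟩
    rintro f ⟨φ, hφ, rfl⟩
    show M.sat (iota M v Label.a0) φ
    rw [iota]
    exact hv φ hφ
  have stepInv : ∀ p, Inv p → (¬ ∃ i, Inv (p ++ [i])) →
      ∀ i, Tb.node (p ++ [i]) = none := by
    rintro p ⟨s, hps, hrs⟩ hno i
    rcases Tb.step p s hps with hall | ⟨ds, hC, hch⟩
    · exact hall i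
    · obtain ⟨d, hd, hrd⟩ := realized_step M v s ds hrs hC
      obtain ⟨j, hj, hdj⟩ := List.mem_iff_getElem.mp hd
      refine absurd ⟨j, s ∪ d, ?_, hrd⟩ hno
      rw [hch j, List.getElem?_eq_getElem hj, hdj]
      rfl
  -- the chosen path
  set f : ℕ → Option (List ℕ) := fun n =>
    Nat.rec (motive := fun _ => Option (List ℕ)) (some ([] : List ℕ))
      (fun _ op => op.bind fun p =>
        if h : ∃ i, Inv (p ++ [i]) then some (p ++ [h.choose]) else none) n with hfDef
  have hf0 : f 0 = some [] := rfl
  have hfsucc : ∀ n, f (n + 1) = (f n).bind fun p =>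
      if h : ∃ i, Inv (p ++ [i]) then some (p ++ [h.choose]) else none :=
    fun n => rfl
  have hfInv : ∀ n p, f n = some p → Inv p := by
    intro n
    induction n with
    | zero =>
      intro p hp
      rw [hf0, Option.some.injEq] at hp
      rw [← hp]
      exact hInvRoot
    | succ n ih =>
      intro p hp
      rw [hfsucc n] at hp
      cases hfn : f n with
      | none => rw [hfn] at hp; simp at hp
      | some p' =>
        rw [hfn, Option.bind_some] at hp
        by_cases hx : ∃ i, Inv (p' ++ [i])
        · rw [dif_pos hx, Option.some.injEq] at hp
          rw [← hp]
          exact hx.choose_spec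
        · rw [dif_neg hx] at hp; cases hp
  have hfstep : ∀ n p, f (n + 1) = some p →
      ∃ p', f n = some p' ∧ p' <+: p ∧ p'.length + 1 = p.length := by
    intro n p hp
    rw [hfsucc n] at hp
    cases hfn : f n with
    | none => rw [hfn] at hp; simp at hp
    | some p' =>
      rw [hfn, Option.bind_some] at hp
      by_cases hx : ∃ i, Inv (p' ++ [i])
      · rw [dif_pos hx, Option.some.injEq] at hp
        exact ⟨p', rfl, by rw [← hp]; exact ⟨_, rfl⟩, by rw [← hp]; simp⟩
      · rw [dif_neg hx] at hp; cases hp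
  have hflen : ∀ n p, f n = some p → p.length = n := by
    intro n
    induction n with
    | zero =>
      intro p hp
      rw [hf0, Option.some.injEq] at hp
      rw [← hp]; rfl
    | succ n ih =>
      intro p hp
      obtain ⟨p', hp', _, hlen⟩ := hfstep n p hp
      rw [← hlen, ih p' hp']
  have hnone_succ : ∀ n, f n = none → f (n + 1) = none := by
    intro n hn
    rw [hfsucc n, hn]
    rfl
  have hnone_mono : ∀ a b, a ≤ b → f a = none → f b = none := by
    intro a b hab
    induction b, hab using Nat.le_induction with
    | base => exact id
    | succ b hb ih => intro h; exact hnone_succ b (ih h)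
  have hprefix : ∀ k n, n ≤ k → ∀ q, f k = some q →
      ∃ p, f n = some p ∧ p <+: q := by
    intro k
    induction k with
    | zero =>
      intro n hn q hq
      interval_cases n
      exact ⟨q, hq, List.prefix_refl q⟩
    | succ k ih =>
      intro n hn q hq
      rcases Nat.lt_or_ge n (k + 1) with h | h
      · obtain ⟨p', hp', hpre, _⟩ := hfstep k q hq
        obtain ⟨p, hp, hpre'⟩ := ih n (by omega) p' hp'
        exact ⟨p, hp, hpre'.trans hpre⟩
      · have : n = k + 1 := by omega
        subst this
        exact ⟨q, hq, List.prefix_refl q⟩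
  refine ⟨⟨{p | ∃ n, f n = some p}, ?_, ?_, ?_, ?_⟩, ?_⟩
  · -- inTree
    rintro p ⟨n, hn⟩
    obtain ⟨s, hs, -⟩ := hfInv n p hn
    rw [hs]
    exact Option.some_ne_none _
  · -- chain
    rintro p ⟨n, hn⟩ q ⟨k, hk⟩
    rcases le_total n k with hle | hle
    · obtain ⟨p', hp', hpre⟩ := hprefix k n hle q hk
      rw [hn, Option.some.injEq] at hp'
      exact Or.inl (hp' ▸ hpre)
    · obtain ⟨q', hq', hpre⟩ := hprefix n k hle p hn
      rw [hk, Option.some.injEq] at hq'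
      exact Or.inr (hq' ▸ hpre)
  · -- downClosed
    rintro p ⟨n, hn⟩ q hq
    have hl : q.length ≤ n := by
      have := hq.length_le
      have := hflen n p hn
      omega
    obtain ⟨p', hp', hpre⟩ := hprefix n q.length hl p hn
    have hp'q : p' = q := by
      refine List.IsPrefix.eq_of_length ?_ ?_
      · exact List.prefix_of_prefix_length_le hpre hq (by rw [hflen _ _ hp'])
      · rw [hflen _ _ hp']
    exact ⟨q.length, hp'q ▸ hp'⟩
  · -- maximal
    intro q hq hcomp
    cases hql : f q.length with
    | some p' =>
      have hp'len := hflen _ _ hql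
      rcases hcomp p' ⟨_, hql⟩ with h | h
      · have : p' = q := h.eq_of_length (by omega)
        exact ⟨q.length, this ▸ hql⟩
      · have : q = p' := h.eq_of_length (by omega)
        exact ⟨q.length, this ▸ hql⟩
    | none =>
      exfalso
      have hne : ∃ k, f k = none := ⟨q.length, hql⟩
      have hn₀ : f (Nat.find hne) = none := Nat.find_spec hne
      have hn₀pos : 0 < Nat.find hne := by
        rcases Nat.eq_zero_or_pos (Nat.find hne) with h | h
        · rw [h, hf0] at hn₀; cases hn₀
        · exact h
      obtain ⟨n, hn⟩ : ∃ n, Nat.find hne = n + 1 := ⟨Nat.find hne - 1, by omega⟩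
      have hfnsome : f n ≠ none := Nat.find_min hne (by omega)
      obtain ⟨p, hp⟩ := Option.ne_none_iff_exists'.mp hfnsome
      have hInvp := hfInv n p hp
      have hnoInv : ¬ ∃ i, Inv (p ++ [i]) := by
        intro hx
        have h2 : f (n + 1) = if h : ∃ i, Inv (p ++ [i])
            then some (p ++ [h.choose]) else none := by
          rw [hfsucc n, hp, Option.bind_some]
        rw [← hn, hn₀, dif_pos hx] at h2
        cases h2
      have hchildren := stepInv p hInvp hnoInv
      have hqlen : n < q.length := by
        by_contra hle
        push_neg at hle
        rcases Nat.lt_or_ge q.length n with h | h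
        · exact hfnsome (hnone_mono q.length n (by omega) hql)
        · have : q.length = n := by omega
          rw [this, hp] at hql
          cases hql
      have hplen := hflen n p hp
      rcases hcomp p ⟨n, hp⟩ with h | h
      · obtain ⟨r, hr⟩ := h
        cases r with
        | nil =>
          rw [List.append_nil] at hr
          rw [← hr] at hqlen
          omega
        | cons i r' =>
          have hpre : (p ++ [i]) <+: q := by
            rw [← hr]
            exact ⟨r', by simp⟩
          exact (node_ne_none_of_prefix Tb q hq (p ++ [i]) hpre) (hchildren i)
      · have := h.length_le
        omega
  · -- IsOpen
    intro hC
    have key : ∀ g₁ g₂ : TabFm m,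
        (∃ p, (∃ n, f n = some p) ∧ ∃ s, Tb.node p = some s ∧ g₁ ∈ s) →
        (∃ p, (∃ n, f n = some p) ∧ ∃ s, Tb.node p = some s ∧ g₂ ∈ s) →
        ∃ s, Realized M (iota M v) s ∧ g₁ ∈ s ∧ g₂ ∈ s := by
      rintro g₁ g₂ ⟨p₁, ⟨n₁, hfn₁⟩, s₁, hns₁, hin₁⟩ ⟨p₂, ⟨n₂, hfn₂⟩, s₂, hns₂, hin₂⟩
      have hreal : ∀ n p s, f n = some p → Tb.node p = some s →
          Realized M (iota M v) s := by
        intro n p s hfp hnp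
        obtain ⟨s', hs', hr⟩ := hfInv n p hfp
        rw [hnp, Option.some.injEq] at hs'
        rw [hs']
        exact hr
      rcases le_total n₁ n₂ with hle | hle
      · obtain ⟨p', hp', hpre⟩ := hprefix n₂ n₁ hle p₂ hfn₂
        rw [hfn₁, Option.some.injEq] at hp'
        subst hp'
        exact ⟨s₂, hreal n₂ p₂ s₂ hfn₂ hns₂,
          subset_of_prefix Tb p₂ p₁ s₁ s₂ hpre hns₁ hns₂ hin₁, hin₂⟩
      · obtain ⟨p', hp', hpre⟩ := hprefix n₁ n₂ hle p₁ hfn₁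
        rw [hfn₂, Option.some.injEq] at hp'
        subst hp'
        exact ⟨s₁, hreal n₁ p₁ s₁ hfn₁ hns₁, hin₁,
          subset_of_prefix Tb p₁ p₂ s₂ s₁ hpre hns₂ hns₁ hin₂⟩
    rcases hC with ⟨φ,x,h,heq⟩|⟨φ,x,h,heq⟩|⟨φ,ψ,x,h,heq⟩|⟨φ,ψ,x,h,heq⟩|
      ⟨α,φ,x,y,h,hy,heq⟩|⟨α,φ,x,h,heq⟩|⟨φ,x,h1,h2,-⟩|⟨α,x,y,h1,h2,-⟩|
      ⟨α,x,y,h,heq⟩|⟨α,x,y,h,heq⟩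
    · cases heq
    · cases heq
    · cases heq
    · cases heq
    · cases heq
    · cases heq
    · obtain ⟨s, hr, h1s, h2s⟩ := key _ _ h1 h2
      have hT := hr _ h1s
      have hF := hr _ h2s
      simp only [Holds] at hT hF
      exact hF hT
    · obtain ⟨s, hr, h1s, h2s⟩ := key _ _ h1 h2
      have hT := hr _ h1s
      have hF := hr _ h2s
      simp only [Holds] at hT hF
      exact hF hT
    · cases heq
    · cases heq

end Aux

/-- The tableau calculus `T_{K_m(¬)}` is sound and constructively
complete for the logic `K_m(¬)`: every fully expanded `T_{K_m(¬)}`-tableau for a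
satisfiable finite set of `K_m(¬)`-formulas has an open branch, and for every open
branch `B` of a fully expanded `T_{K_m(¬)}`-tableau there exists a `K_m(¬)`-model
`I(B)`, whose domain is the set of labels occurring in `B`, in which every tableau
formula of `B` is true. -/
theorem TKmNot_sound_and_constructively_complete (m : ℕ) :
    (∀ N : Set (Fm m), N.Finite → Satisfiable N →
      ∀ Tb : Tableau m (TKmNot m) N, Tb.Expanded → ∃ Br : Branch Tb, Br.IsOpen) ∧
    (∀ (N : Set (Fm m)) (Tb : Tableau m (TKmNot m) N), Tb.Expanded →
      ∀ Br : Branch Tb, Br.IsOpen → ∃ M : LModel m, Reflects M Br.fmls) := by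
  constructor
  · rintro N - ⟨M, v, hv⟩ Tb -
    exact exists_open_branch N M v hv Tb
  · intro N Tb hExp Br hOpen
    exact reflects_of_open Br.fmls hOpen (hExp Br hOpen)

end KmNotTableau
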